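/- Let M ⊆ ℝⁿ be a compact, closed (without boundary), m-dimensional embedded submanifold of class C². Then the discrete curvature K is uniformly bounded on M^{m+2}, i.e. sup{ K(x₀,…,x_{m+1}) : x₀,…,x_{m+1} ∈ M } < ∞, and the p-energy E_p(M) is finite for every p > 0. -/

import Mathlib

open Metric MeasureTheory Filter
open scoped RealInnerProductSpace ENNReal NNReal

noncomputable section

abbrev Euc (n : ℕ) := EuclideanSpace ℝ (Fin n)

variable {n : ℕ}

/-- Orthogonal projection onto a subspace, as a continuous linear map on the whole space. -/
noncomputable def projCLM (U : Submodule ℝ (Euc n)) : Euc n →L[ℝ] Euc n :=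
  U.subtypeL.comp U.orthogonalProjectionOnto

/-- Orthogonal projection onto the orthogonal complement. -/
noncomputable def QCLM (U : Submodule ℝ (Euc n)) : Euc n →L[ℝ] Euc n :=
  projCLM Uᗮ

/-- The metric on the Grassmannian: operator norm distance of orthogonal projections. -/
noncomputable def dG (U V : Submodule ℝ (Euc n)) : ℝ :=
  ‖projCLM U - projCLM V‖

/-- The cone with axis `Hᗮ` and "angle" `δ`. -/
def angCone (δ : ℝ) (H : Submodule ℝ (Euc n)) : Set (Euc n) :=
  {x | δ * ‖x‖ ≤ ‖QCLM H x‖}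

/-- The shell (n-annulus) of radii `r` and `R`. -/
def shell (r R : ℝ) : Set (Euc n) :=
  Metric.ball (0 : Euc n) R \ Metric.closedBall (0 : Euc n) r

/-- Conical cap: intersection of a cone and a shell. -/
def conicalCap (δ : ℝ) (H : Submodule ℝ (Euc n)) (r R : ℝ) : Set (Euc n) :=
  angCone δ H ∩ shell r R

/-- Symmetrized Hausdorff-type distance: sum of the two one-sided deviations. -/
noncomputable def hDistSum (A B : Set (Euc n)) : ℝ :=
  (⨆ y : A, Metric.infDist (y : Euc n) B) + (⨆ y : B, Metric.infDist (y : Euc n) A)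

/-- Jones β-number (closed-ball version). -/
noncomputable def betaBar (m : ℕ) (S : Set (Euc n)) (x : Euc n) (r : ℝ) : ℝ :=
  (1/r) * ⨅ H : {H : Submodule ℝ (Euc n) // Module.finrank ℝ H = m},
    ⨆ z : ↥(S ∩ Metric.closedBall x r), ‖QCLM H.1 ((z : Euc n) - x)‖

/-- Jones β-number (open-ball version). -/
noncomputable def betaOpen (m : ℕ) (S : Set (Euc n)) (x : Euc n) (r : ℝ) : ℝ :=
  (1/r) * ⨅ H : {H : Submodule ℝ (Euc n) // Module.finrank ℝ H = m},
    ⨆ z : ↥(S ∩ Metric.ball x r), ‖QCLM H.1 ((z : Euc n) - x)‖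

/-- Reifenberg θ-number (closed-ball version). -/
noncomputable def thetaBar (m : ℕ) (S : Set (Euc n)) (x : Euc n) (r : ℝ) : ℝ :=
  (1/r) * ⨅ H : {H : Submodule ℝ (Euc n) // Module.finrank ℝ H = m},
    hDistSum (S ∩ Metric.closedBall x r)
      ((fun v => x + v) '' (H.1 : Set (Euc n)) ∩ Metric.closedBall x r)

/-- Reifenberg θ-number (open-ball version). -/
noncomputable def thetaOpen (m : ℕ) (S : Set (Euc n)) (x : Euc n) (r : ℝ) : ℝ :=
  (1/r) * ⨅ H : {H : Submodule ℝ (Euc n) // Module.finrank ℝ H = m},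
    hDistSum (S ∩ Metric.ball x r)
      ((fun v => x + v) '' (H.1 : Set (Euc n)) ∩ Metric.ball x r)

/-- Discrete Menger-type curvature of an `(m+2)`-tuple of points. -/
noncomputable def discCurv (m : ℕ) (x : Fin (m+2) → Euc n) : ℝ :=
  (μH[((m : ℝ) + 1)] (convexHull ℝ (Set.range x))).toReal / Metric.diam (Set.range x) ^ (m+2)

/-- Iterated lower integral over `k` copies of a measure. -/
noncomputable def multiLIntegral (μ : Measure (Euc n)) :
    (k : ℕ) → ((Fin k → Euc n) → ℝ≥0∞) → ℝ≥0∞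
  | 0, f => f Fin.elim0
  | k+1, f => ∫⁻ x, multiLIntegral μ k (fun v => f (Fin.cons x v)) ∂μ

/-- The `p`-energy of a set: the integral of `K^p` over `(m+2)`-tuples of points of `S`,
with respect to the `m`-dimensional Hausdorff measure restricted to `S`. -/
noncomputable def energy (m : ℕ) (p : ℝ) (S : Set (Euc n)) : ℝ≥0∞ :=
  multiLIntegral ((μH[(m : ℝ)]).restrict S) (m+2) fun x => ENNReal.ofReal (discCurv m x ^ p)

/-- The class `V_k(η,d)` of `(η,d)`-voluminous `(k+1)`-simplices. -/
def IsVol (k : ℕ) (η d : ℝ) (x : Fin (k+2) → Euc n) : Prop :=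
  (∃ c : Euc n, convexHull ℝ (Set.range x) ⊆ Metric.closedBall c d) ∧
  ENNReal.ofReal ((η * d) ^ k) ≤
    μH[(k : ℝ)] (convexHull ℝ (Set.range fun i : Fin (k+1) => x i.castSucc)) ∧
  η * d ≤ Metric.infDist (x (Fin.last (k+1)))
    (affineSpan ℝ (Set.range fun i : Fin (k+1) => x i.castSucc) : Set (Euc n))

/-- Pseudo-distance between two simplices given by vertex tuples. -/
noncomputable def simplexDist (k : ℕ) (x y : Fin (k+2) → Euc n) : ℝ :=
  ⨅ σ : Equiv.Perm (Fin (k+2)), ⨆ i, dist (x i) (y (σ i))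

/-- Best approximating `m`-planes for `S` in the closed ball `B̄(x,r)`. -/
def BAP (m : ℕ) (S : Set (Euc n)) (x : Euc n) (r : ℝ) : Set (Submodule ℝ (Euc n)) :=
  {H | Module.finrank ℝ H = m ∧
    hDistSum (S ∩ Metric.closedBall x r)
      ((fun v => x + v) '' (H : Set (Euc n)) ∩ Metric.closedBall x r) ≤ r * thetaBar m S x r}

/-- `m`-fine sets with constants `A`, `R`, `M`. -/
def IsFine (m : ℕ) (S : Set (Euc n)) (A R M : ℝ) : Prop :=
  IsCompact S ∧ 0 < A ∧ 0 < R ∧ 2 ≤ M ∧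
  (∀ x ∈ S, ∀ r : ℝ, 0 < r → r ≤ R →
    ENNReal.ofReal (A * r ^ m) ≤ μH[(m : ℝ)] (S ∩ Metric.ball x r)) ∧
  (∀ x ∈ S, ∀ r : ℝ, 0 < r → r ≤ R → thetaBar m S x r ≤ M * betaBar m S x r)

/-- `T` is the (m-dimensional) tangent plane of `S` at `x`: the limit in the Grassmannian
metric of best approximating planes as the scale tends to `0`. -/
def IsTangentAt (m : ℕ) (S : Set (Euc n)) (x : Euc n) (T : Submodule ℝ (Euc n)) : Prop :=
  Module.finrank ℝ T = m ∧
  ∀ ε > 0, ∃ r₀ > 0, ∀ r : ℝ, 0 < r → r ≤ r₀ → ∀ H ∈ BAP m S x r, dG T H ≤ ε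


section Auxiliary

set_option maxHeartbeats 1000000

open Set Module

/-- Box parametrization bound for Hausdorff measure. -/
lemma box_bound {k : ℕ} (b : Fin k → Euc n) (x₀ : Euc n) (s : Set (Euc n))
    (r : Fin k → ℝ)
    (hs : ∀ z ∈ s, ∃ a : Fin k → ℝ, z = x₀ + ∑ j, a j • b j ∧ ∀ j, |a j| ≤ r j)
    (hb : ∀ j, ‖b j‖ = 1) :
    μH[(k : ℝ)] s ≤ (k : ℝ≥0∞) ^ (k : ℕ) * ∏ j, ENNReal.ofReal (2 * r j) := by
  classical
  set F : (Fin k → ℝ) → Euc n := fun a => x₀ + ∑ j, a j • b j with hF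
  have hLip : LipschitzWith (k : ℝ≥0) F := by
    apply LipschitzWith.of_dist_le_mul
    intro a a'
    have : F a - F a' = ∑ j, (a j - a' j) • b j := by
      simp only [hF]
      rw [add_sub_add_left_eq_sub, ← Finset.sum_sub_distrib]
      congr 1; ext j; rw [sub_smul]
    rw [dist_eq_norm, this]
    calc ‖∑ j, (a j - a' j) • b j‖ ≤ ∑ j, ‖(a j - a' j) • b j‖ := norm_sum_le _ _
      _ = ∑ j, |a j - a' j| := by
          congr 1; ext j; rw [norm_smul, hb j, mul_one, Real.norm_eq_abs]
      _ ≤ ∑ _j : Fin k, dist a a' := by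
          apply Finset.sum_le_sum
          intro j _
          have := dist_le_pi_dist a a' j
          simpa [Real.dist_eq] using this
      _ = (k : ℝ) * dist a a' := by simp [Finset.sum_const, mul_comm]
  have hsub : s ⊆ F '' (Set.univ.pi fun j => Icc (-(r j)) (r j)) := by
    intro z hz
    obtain ⟨a, hza, ha⟩ := hs z hz
    exact ⟨a, fun j _ => abs_le.1 (ha j), hza.symm⟩
  calc μH[(k : ℝ)] s ≤ μH[(k : ℝ)] (F '' (Set.univ.pi fun j => Icc (-(r j)) (r j))) :=
        measure_mono hsub
    _ ≤ ((k : ℝ≥0) : ℝ≥0∞) ^ (k : ℝ) * μH[(k : ℝ)] (Set.univ.pi fun j => Icc (-(r j)) (r j)) :=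
        hLip.hausdorffMeasure_image_le (by positivity) _
    _ = (k : ℝ≥0∞) ^ (k : ℕ) * ∏ j, ENNReal.ofReal (2 * r j) := by
        have hcard : ((Fintype.card (Fin k) : ℝ)) = (k : ℝ) := by simp
        rw [← hcard, hausdorffMeasure_pi_real]
        rw [volume_pi_pi]
        congr 1
        · rw [← ENNReal.rpow_natCast]
          norm_cast
          simp
        · congr 1; ext j; rw [Real.volume_Icc]; congr 1; ring

/-- Expansion of an element of a subspace in an orthonormal basis of the subspace. -/
lemma onb_expansion {W : Submodule ℝ (Euc n)} {k : ℕ} (B : OrthonormalBasis (Fin k) ℝ ↥W)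
    {z : Euc n} (hz : z ∈ W) :
    z = ∑ j, (⟪((B j : Euc n)), z⟫) • (B j : Euc n) := by
  have h := B.sum_repr' (⟨z, hz⟩ : ↥W)
  calc z = (Submodule.subtype W) (⟨z, hz⟩ : ↥W) := rfl
    _ = (Submodule.subtype W) (∑ j, (⟪B j, (⟨z, hz⟩ : ↥W)⟫) • B j) := by rw [h]
    _ = ∑ j, (⟪((B j : Euc n)), z⟫) • (B j : Euc n) := by
        simp only [map_sum, _root_.map_smul, Submodule.subtype_apply]
        exact Finset.sum_congr rfl fun j _ => by rw [Submodule.coe_inner]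

/-- Slab bound: the `(m+1)`-dimensional Hausdorff measure of a convex hull of `m+2` points
lying within distance `t` of a translate of an `m`-dimensional subspace, within a ball of
radius `d`. -/
lemma slab_bound (m : ℕ) (x : Fin (m+2) → Euc n) (U : Submodule ℝ (Euc n))
    (hU : Module.finrank ℝ U = m) (d t : ℝ) (hd : 0 ≤ d) (ht : 0 ≤ t)
    (h1 : ∀ i, ‖x i - x 0‖ ≤ d)
    (h2 : ∀ i, ∃ y ∈ U, ‖x i - x 0 - y‖ ≤ t) :
    μH[((m : ℝ)+1)] (convexHull ℝ (Set.range x))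
      ≤ ENNReal.ofReal ((2*((m : ℝ)+1))^(m+1) * (d^m * t)) := by
  classical
  set v : Fin (m+2) → Euc n := fun i => x i - x 0 with hv
  set W := Submodule.span ℝ (Set.range v) with hW
  have hWv : ∀ i, v i ∈ W := fun i => Submodule.subset_span (Set.mem_range_self i)
  have hk : Module.finrank ℝ W ≤ m + 1 := by
    have hsub : Set.range v ⊆ insert 0 (Set.range (v ∘ Fin.succ)) := by
      rintro _ ⟨i, rfl⟩
      refine Fin.cases ?_ ?_ i
      · left; simp [hv]
      · intro j; right; exact ⟨j, rfl⟩
    have hle : W ≤ Submodule.span ℝ (Set.range (v ∘ Fin.succ)) := by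
      rw [hW]
      refine (Submodule.span_mono hsub).trans ?_
      rw [Submodule.span_insert_zero]
    refine (Submodule.finrank_mono hle).trans ?_
    refine (finrank_span_le_card _).trans ?_
    have := Fintype.card_range_le (v ∘ Fin.succ)
    rw [Set.toFinset_card]
    simpa using this
  have hhull1 : ∀ z ∈ convexHull ℝ (Set.range x), z - x 0 ∈ W := by
    intro z hz
    have hconv : Convex ℝ {z : Euc n | z - x 0 ∈ W} := by
      intro z1 hz1 z2 hz2 a b ha hb hab
      have : a • z1 + b • z2 - x 0 = a • (z1 - x 0) + b • (z2 - x 0) := by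
        have hb' : b = 1 - a := by linarith
        subst hb'; module
      simp only [Set.mem_setOf_eq, this]
      exact W.add_mem (W.smul_mem _ hz1) (W.smul_mem _ hz2)
    have := convexHull_min (fun y hy => ?_) hconv hz
    · exact this
    · obtain ⟨i, rfl⟩ := hy
      exact hWv i
  have hhull2 : convexHull ℝ (Set.range x) ⊆ Metric.closedBall (x 0) d := by
    refine convexHull_min ?_ (convex_closedBall _ _)
    rintro _ ⟨i, rfl⟩
    rw [Metric.mem_closedBall, dist_eq_norm]
    exact h1 i
  rcases lt_or_eq_of_le hk with hklt | hkeq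
  · -- degenerate case: finrank W ≤ m
    have hfin : μH[((Module.finrank ℝ W : ℕ) : ℝ)] (convexHull ℝ (Set.range x)) ≠ ⊤ := by
      set B := stdOrthonormalBasis ℝ ↥W
      have hbd := box_bound (fun j => (B j : Euc n)) (x 0) (convexHull ℝ (Set.range x))
        (fun _ => d) (fun z hz => ?_) (fun j => by
          rw [Submodule.norm_coe]; exact B.orthonormal.1 j)
      · refine ne_top_of_le_ne_top ?_ hbd
        exact (ENNReal.mul_lt_top (by simp [ENNReal.pow_lt_top, ENNReal.natCast_lt_top])
          (by exact ENNReal.prod_lt_top (fun _ _ => ENNReal.ofReal_lt_top))).ne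
      · refine ⟨fun j => (⟪((B j : Euc n)), z - x 0⟫ : ℝ), ?_, fun j => ?_⟩
        · rw [← onb_expansion B (hhull1 z hz)]; abel
        · refine (abs_real_inner_le_norm _ _).trans ?_
          rw [Submodule.norm_coe, B.orthonormal.1 j, one_mul]
          have := hhull2 hz
          rwa [Metric.mem_closedBall, dist_eq_norm] at this
    rcases MeasureTheory.Measure.hausdorffMeasure_zero_or_top
        (show ((Module.finrank ℝ W : ℕ) : ℝ) < (m : ℝ) + 1 by exact_mod_cast hklt)
        (convexHull ℝ (Set.range x)) with h | h
    · rw [h]; exact zero_le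
    · exact absurd h hfin
  · -- main case: finrank W = m+1
    have hUW : W ⊓ Uᗮ ≠ ⊥ := by
      intro hbot
      have h1' := Submodule.finrank_sup_add_finrank_inf_eq W Uᗮ
      have h2' : Module.finrank ℝ U + Module.finrank ℝ Uᗮ = n := by
        have := Submodule.finrank_add_finrank_orthogonal U
        rwa [finrank_euclideanSpace_fin] at this
      have h3' : Module.finrank ℝ ↥(W ⊔ Uᗮ) ≤ n := by
        have := Submodule.finrank_le (W ⊔ Uᗮ)
        rwa [finrank_euclideanSpace_fin] at this
      rw [hbot] at h1'
      simp only [finrank_bot, add_zero] at h1'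
      omega
    obtain ⟨w0, hw0, hw0ne⟩ := Submodule.exists_mem_ne_zero_of_ne_bot hUW
    set w : Euc n := ‖w0‖⁻¹ • w0 with hwdef
    have hwnorm : ‖w‖ = 1 := norm_smul_inv_norm hw0ne
    have hwW : w ∈ W := W.smul_mem _ (hw0.1)
    have hwU : w ∈ Uᗮ := Uᗮ.smul_mem _ (hw0.2)
    have hz3 : ∀ z ∈ convexHull ℝ (Set.range x), |⟪w, z - x 0⟫| ≤ t := by
      intro z hz
      have hconv : Convex ℝ {z : Euc n | |⟪w, z - x 0⟫| ≤ t} := by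
        intro z1 hz1 z2 hz2 a b ha hb hab
        have hsum : a • z1 + b • z2 - x 0 = a • (z1 - x 0) + b • (z2 - x 0) := by
          have hb' : b = 1 - a := by linarith
          subst hb'; module
        simp only [Set.mem_setOf_eq, hsum, inner_add_right, real_inner_smul_right]
        calc |a * ⟪w, z1 - x 0⟫ + b * ⟪w, z2 - x 0⟫|
            ≤ |a * ⟪w, z1 - x 0⟫| + |b * ⟪w, z2 - x 0⟫| := abs_add_le _ _
          _ = a * |⟪w, z1 - x 0⟫| + b * |⟪w, z2 - x 0⟫| := by
              rw [abs_mul, abs_mul, abs_of_nonneg ha, abs_of_nonneg hb]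
          _ ≤ a * t + b * t := by
              gcongr
              · exact hz1
              · exact hz2
          _ = t := by rw [← add_mul, hab, one_mul]
      refine convexHull_min ?_ hconv hz
      rintro _ ⟨i, rfl⟩
      obtain ⟨y, hyU, hyt⟩ := h2 i
      have hy0 : ⟪w, y⟫ = 0 := by
        rw [real_inner_comm]
        exact Submodule.inner_right_of_mem_orthogonal hyU hwU
      have : ⟪w, x i - x 0⟫ = ⟪w, x i - x 0 - y⟫ := by
        conv_rhs => rw [inner_sub_right]
        rw [hy0, sub_zero]
      simp only [Set.mem_setOf_eq, this]
      refine (abs_real_inner_le_norm _ _).trans ?_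
      rw [hwnorm, one_mul]
      exact hyt
    -- orthonormal basis of W with last vector w
    have hcard : Module.finrank ℝ ↥W = Fintype.card (Fin (m+1)) := by
      simp [hkeq.symm]
    set w' : ↥W := ⟨w, hwW⟩ with hw'
    have hw'norm : ‖w'‖ = 1 := by rw [← Submodule.norm_coe (𝕜 := ℝ) w']; exact hwnorm
    have hOn : Orthonormal ℝ (({Fin.last m} : Set (Fin (m+1))).restrict
        (fun _ : Fin (m+1) => w')) := by
      constructor
      · intro i; exact hw'norm
      · intro i j hij
        exfalso
        exact hij (Subtype.ext ((Set.eq_of_mem_singleton i.2).trans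
          (Set.eq_of_mem_singleton j.2).symm))
    obtain ⟨B, hB⟩ := hOn.exists_orthonormalBasis_extension_of_card_eq hcard
    have hBlast : (B (Fin.last m) : Euc n) = w := by
      rw [hB (Fin.last m) rfl]
    set r : Fin (m+1) → ℝ := fun j => if j = Fin.last m then t else d with hrdef
    have hbd := box_bound (fun j => (B j : Euc n)) (x 0) (convexHull ℝ (Set.range x)) r
      (fun z hz => ?_) (fun j => by rw [Submodule.norm_coe]; exact B.orthonormal.1 j)
    · have hcast : ((m : ℝ) + 1) = (((m+1 : ℕ)) : ℝ) := by push_cast; ring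
      rw [hcast]
      refine hbd.trans ?_
      have hprod : ∏ j, ENNReal.ofReal (2 * r j)
          = (ENNReal.ofReal (2 * d))^m * ENNReal.ofReal (2 * t) := by
        rw [Fin.prod_univ_castSucc]
        congr 1
        · calc ∏ i : Fin m, ENNReal.ofReal (2 * r i.castSucc)
              = ∏ _i : Fin m, ENNReal.ofReal (2 * d) := Finset.prod_congr rfl (fun i _ => by
                  simp [hrdef, Fin.ne_last_of_lt (Fin.castSucc_lt_last i)])
            _ = ENNReal.ofReal (2 * d) ^ m := by
                rw [Finset.prod_const, Finset.card_univ, Fintype.card_fin]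
        · rw [hrdef]; simp
      rw [hprod]
      have e1 : ((m+1 : ℕ) : ℝ≥0∞) = ENNReal.ofReal ((m : ℝ) + 1) := by
        rw [← ENNReal.ofReal_natCast]; norm_num
      rw [e1, ← ENNReal.ofReal_pow (by positivity), ← ENNReal.ofReal_pow (by positivity),
        ← ENNReal.ofReal_mul (by positivity), ← ENNReal.ofReal_mul (by positivity)]
      refine ENNReal.ofReal_le_ofReal (le_of_eq ?_)
      push_cast
      rw [mul_pow, mul_pow]
      ring
    · refine ⟨fun j => (⟪((B j : Euc n)), z - x 0⟫ : ℝ), ?_, fun j => ?_⟩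
      · rw [← onb_expansion B (hhull1 z hz)]; abel
      · by_cases hj : j = Fin.last m
        · subst hj
          simp only [hBlast, hrdef, if_pos]
          exact hz3 z hz
        · simp only [hrdef, hj, if_false]
          refine (abs_real_inner_le_norm _ _).trans ?_
          rw [Submodule.norm_coe, B.orthonormal.1 j, one_mul]
          have := hhull2 hz
          rwa [Metric.mem_closedBall, dist_eq_norm] at this

lemma norm_le_of_orth {H : Submodule ℝ (Euc n)} {a b : Euc n} (ha : a ∈ H) (hb : b ∈ Hᗮ) :
    ‖a‖ ≤ ‖a + b‖ := by
  have h0 : ⟪a, b⟫ = 0 := Submodule.inner_right_of_mem_orthogonal ha hb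
  have hsq := norm_add_sq_real a b
  rw [h0] at hsq
  nlinarith [norm_nonneg (a + b), norm_nonneg a, norm_nonneg b, sq_nonneg ‖b‖]

lemma QCLM_norm_le {H : Submodule ℝ (Euc n)} (z : Euc n) : ‖QCLM H z‖ ≤ ‖z‖ := by
  show ‖(Hᗮ.orthogonalProjectionOnto z : Euc n)‖ ≤ ‖z‖
  rw [Submodule.norm_coe]
  calc ‖Hᗮ.orthogonalProjectionOnto z‖ ≤ ‖Hᗮ.orthogonalProjectionOnto‖ * ‖z‖ :=
        (Hᗮ.orthogonalProjectionOnto).le_opNorm z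
    _ ≤ 1 * ‖z‖ := mul_le_mul_of_nonneg_right (Submodule.orthogonalProjectionOnto_norm_le _) (norm_nonneg z)
    _ = ‖z‖ := one_mul _

lemma QCLM_mem {H : Submodule ℝ (Euc n)} (z : Euc n) : QCLM H z ∈ Hᗮ := SetLike.coe_mem _

lemma QCLM_eq_self {H : Submodule ℝ (Euc n)} {z : Euc n} (hz : z ∈ Hᗮ) : QCLM H z = z :=
  Submodule.starProjection_eq_self_iff.2 hz

/-- Chart lemma: local curvature bound and local finiteness of the Hausdorff measure. -/
lemma chart_bound (m : ℕ) (M : Set (Euc n)) (x : Euc n)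
    (H : Submodule ℝ (Euc n)) (hHm : Module.finrank ℝ H = m)
    {ρ : ℝ} (hρ : 0 < ρ) (F : ↥H → Euc n)
    (hF : ContDiff ℝ 2 F) (hFmem : ∀ w, F w ∈ Hᗮ)
    (heq : M ∩ Metric.ball x ρ
      = {y ∈ Metric.ball x ρ | ∃ w : ↥H, y = x + (w : Euc n) + F w}) :
    (∃ C : ℝ, 0 ≤ C ∧ ∀ y : Fin (m+2) → Euc n, (∀ i, y i ∈ M ∩ Metric.ball x ρ) →
      μH[((m : ℝ)+1)] (convexHull ℝ (Set.range y))
        ≤ ENNReal.ofReal (C * Metric.diam (Set.range y)^(m+2)))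
    ∧ μH[(m : ℝ)] (M ∩ Metric.ball x ρ) < ⊤ := by
  classical
  set S : Set ↥H := Metric.closedBall 0 ρ with hS
  have hScompact : IsCompact S := isCompact_closedBall _ _
  have hSconv : Convex ℝ S := convex_closedBall _ _
  set D : ↥H → (↥H →L[ℝ] Euc n) := fderiv ℝ F with hD
  have hD1 : ContDiff ℝ 1 D := hF.fderiv_right (by norm_num)
  have hDdiff : ∀ z : ↥H, HasFDerivAt D (fderiv ℝ D z) z :=
    fun z => ((hD1.differentiable one_ne_zero) z).hasFDerivAt
  have hFdiff : ∀ z : ↥H, HasFDerivAt F (D z) z :=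
    fun z => ((hF.differentiable two_ne_zero) z).hasFDerivAt
  -- bound on the second derivative on S
  obtain ⟨C₂, hC₂⟩ := @IsCompact.exists_bound_of_continuousOn _ _
    ContinuousLinearMap.toSeminormedAddCommGroup.toSeminormedAddGroup _ _ hScompact _
    ((hD1.continuous_fderiv one_ne_zero).continuousOn (s := S))
  set C₂' : ℝ := max C₂ 0 with hC₂'
  have hC₂'0 : 0 ≤ C₂' := le_max_right _ _
  have hLipD : ∀ a ∈ S, ∀ b ∈ S, ‖D b - D a‖ ≤ C₂' * ‖b - a‖ := by
    intro a ha b hb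
    exact Convex.norm_image_sub_le_of_norm_hasFDerivWithin_le (f' := fderiv ℝ D)
      (fun z hz => (hDdiff z).hasFDerivWithinAt)
      (fun z hz => (hC₂ z hz).trans (le_max_left _ _)) hSconv ha hb
  -- bound on the first derivative on S
  obtain ⟨C₁, hC₁⟩ := hScompact.exists_bound_of_continuousOn (f := D)
    (hD1.continuous.continuousOn)
  set C₁' : ℝ := max C₁ 0 with hC₁'
  have hLipF : ∀ a ∈ S, ∀ b ∈ S, ‖F b - F a‖ ≤ C₁' * ‖b - a‖ := by
    intro a ha b hb
    exact Convex.norm_image_sub_le_of_norm_hasFDerivWithin_le (f' := D)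
      (fun z hz => (hFdiff z).hasFDerivWithinAt)
      (fun z hz => (hC₁ z hz).trans (le_max_left _ _)) hSconv ha hb
  -- membership data
  have hmem : ∀ y ∈ M ∩ Metric.ball x ρ, ∃ w : ↥H, y = x + (w : Euc n) + F w ∧ ‖w‖ < ρ := by
    intro y hy
    rw [heq] at hy
    obtain ⟨hball, w, hw⟩ := hy
    refine ⟨w, hw, ?_⟩
    have h1 : y - x = (w : Euc n) + F w := by rw [hw]; abel
    have h2 : ‖(w : Euc n)‖ ≤ ‖y - x‖ := by
      rw [h1]; exact norm_le_of_orth (SetLike.coe_mem w) (hFmem w)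
    rw [Submodule.norm_coe] at h2
    calc ‖w‖ ≤ ‖y - x‖ := h2
      _ < ρ := by rw [← dist_eq_norm]; exact hball
  constructor
  · -- curvature bound
    refine ⟨(2*((m : ℝ)+1))^(m+1) * C₂', by positivity, ?_⟩
    intro y hy
    set d : ℝ := Metric.diam (Set.range y) with hd
    have hd0 : 0 ≤ d := Metric.diam_nonneg
    choose w hw hwρ using fun i => hmem (y i) (hy i)
    have hyd : ∀ i, ‖y i - y 0‖ ≤ d := by
      intro i
      rw [← dist_eq_norm]
      exact Metric.dist_le_diam_of_mem ((Set.finite_range y).isBounded)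
        (Set.mem_range_self i) (Set.mem_range_self 0)
    have hydecomp : ∀ i, y i - y 0 = ((w i - w 0 : ↥H) : Euc n) + (F (w i) - F (w 0)) := by
      intro i
      rw [hw i, hw 0, Submodule.coe_sub]
      abel
    have hwd : ∀ i, ‖w i - w 0‖ ≤ d := by
      intro i
      have := norm_le_of_orth (SetLike.coe_mem (w i - w 0))
        (Submodule.sub_mem _ (hFmem (w i)) (hFmem (w 0)))
      rw [Submodule.norm_coe, ← hydecomp i] at this
      exact this.trans (hyd i)
    have hwS : ∀ i, w i ∈ S := by
      intro i
      rw [hS, Metric.mem_closedBall, dist_zero_right]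
      exact (hwρ i).le
    set φ : ↥H →L[ℝ] Euc n := D (w 0) with hφ
    -- Taylor estimate
    have hTay : ∀ i, ‖F (w i) - F (w 0) - φ (w i - w 0)‖ ≤ C₂' * d * ‖w i - w 0‖ := by
      intro i
      refine Convex.norm_image_sub_le_of_norm_hasFDerivWithin_le'
        (f' := D) (fun z hz => (hFdiff z).hasFDerivWithinAt) ?_
        (hSconv.inter (convex_closedBall (w 0) d)) ⟨hwS 0, by
          rw [Metric.mem_closedBall, dist_self]; exact hd0⟩
        ⟨hwS i, by rw [Metric.mem_closedBall, dist_eq_norm]; exact hwd i⟩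
      intro z hz
      calc ‖D z - φ‖ ≤ C₂' * ‖z - w 0‖ := hLipD (w 0) (hwS 0) z hz.1
        _ ≤ C₂' * d := by
            refine mul_le_mul_of_nonneg_left ?_ hC₂'0
            rw [← dist_eq_norm]
            exact hz.2
    -- the approximating plane
    set ψ : ↥H →ₗ[ℝ] Euc n :=
      (H.subtype : ↥H →ₗ[ℝ] Euc n) + (((QCLM H).comp φ) : ↥H →L[ℝ] Euc n).toLinearMap with hψdef
    have hψ : ∀ u : ↥H, ψ u = (u : Euc n) + QCLM H (φ u) := fun u => rfl
    have hinj : Function.Injective ψ := by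
      intro u u' huu
      have h0 : ψ (u - u') = 0 := by rw [map_sub, huu, sub_self]
      rw [hψ] at h0
      have hu1 : ((u - u' : ↥H) : Euc n) = -(QCLM H (φ (u - u'))) := by
        rw [eq_neg_iff_add_eq_zero]; exact h0
      have hmem1 : ((u - u' : ↥H) : Euc n) ∈ Hᗮ := by
        rw [hu1]; exact Submodule.neg_mem _ (QCLM_mem _)
      have : ((u - u' : ↥H) : Euc n) = 0 := by
        rcases Submodule.disjoint_def.1 H.orthogonal_disjoint _ (SetLike.coe_mem (u - u'))
          hmem1 with h
        exact h
      have := Submodule.coe_eq_zero.1 this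
      rwa [sub_eq_zero] at this
    set U : Submodule ℝ (Euc n) := LinearMap.range ψ with hU
    have hUm : Module.finrank ℝ U = m := by
      rw [hU, LinearMap.finrank_range_of_inj hinj, hHm]
    have hres : ∀ i, y i - y 0 - ψ (w i - w 0)
        = QCLM H (F (w i) - F (w 0) - φ (w i - w 0)) := by
      intro i
      have h1 : y i - y 0 - ψ (w i - w 0)
          = (F (w i) - F (w 0)) - QCLM H (φ (w i - w 0)) := by
        rw [hψ, hydecomp i]
        abel
      rw [h1]
      conv_rhs => rw [map_sub, QCLM_eq_self (Submodule.sub_mem _ (hFmem (w i)) (hFmem (w 0)))]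
    have h2 : ∀ i, ∃ z ∈ U, ‖y i - y 0 - z‖ ≤ C₂' * (d * d) := by
      intro i
      refine ⟨ψ (w i - w 0), LinearMap.mem_range_self _ _, ?_⟩
      rw [hres i]
      calc ‖QCLM H (F (w i) - F (w 0) - φ (w i - w 0))‖
          ≤ ‖F (w i) - F (w 0) - φ (w i - w 0)‖ := QCLM_norm_le _
        _ ≤ C₂' * d * ‖w i - w 0‖ := hTay i
        _ ≤ C₂' * d * d := mul_le_mul_of_nonneg_left (hwd i) (by positivity)
        _ = C₂' * (d * d) := by ring
    have hslab := slab_bound m y U hUm d (C₂' * (d * d)) hd0 (by positivity) hyd h2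
    refine hslab.trans (ENNReal.ofReal_le_ofReal (le_of_eq ?_))
    rw [hd]
    ring
  · -- finiteness of the m-dimensional measure of the chart piece
    set G : Euc n → Euc n := fun z => x + (H.orthogonalProjectionOnto z : Euc n)
      + F (H.orthogonalProjectionOnto z) with hG
    set T : Set (Euc n) := ((↑) : ↥H → Euc n) '' S with hT
    have hMT : M ∩ Metric.ball x ρ ⊆ G '' T := by
      intro y hy
      obtain ⟨w, hw, hwρ⟩ := hmem y hy
      refine ⟨(w : Euc n), ⟨w, by
        rw [hS, Metric.mem_closedBall, dist_zero_right]; exact hwρ.le, rfl⟩, ?_⟩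
      rw [hG]
      simp only [Submodule.orthogonalProjectionOnto_mem_subspace_eq_self]
      exact hw.symm
    have hGLip : ∀ a ∈ T, ∀ b ∈ T, dist (G a) (G b) ≤ (1 + C₁') * dist a b := by
      rintro _ ⟨a, ha, rfl⟩ _ ⟨b, hb, rfl⟩
      simp only [hG, Submodule.orthogonalProjectionOnto_mem_subspace_eq_self]
      rw [dist_eq_norm, dist_eq_norm]
      have h1 : x + (a : Euc n) + F a - (x + (b : Euc n) + F b)
          = ((a : Euc n) - (b : Euc n)) + (F a - F b) := by abel
      rw [h1]
      calc ‖((a : Euc n) - (b : Euc n)) + (F a - F b)‖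
          ≤ ‖(a : Euc n) - (b : Euc n)‖ + ‖F a - F b‖ := norm_add_le _ _
        _ ≤ ‖(a : Euc n) - (b : Euc n)‖ + C₁' * ‖a - b‖ := by
            exact add_le_add_right (hLipF b hb a ha) _
        _ = (1 + C₁') * ‖(a : Euc n) - (b : Euc n)‖ := by
            rw [← Submodule.coe_sub, Submodule.norm_coe]; ring
    have hC₁'0 : (0:ℝ) ≤ 1 + C₁' := by positivity
    have hGLip' : LipschitzOnWith (1 + C₁').toNNReal G T := by
      rw [lipschitzOnWith_iff_dist_le_mul]
      intro a ha b hb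
      rw [Real.coe_toNNReal _ hC₁'0]
      exact hGLip a ha b hb
    -- bound on μH T via the box lemma
    set B := stdOrthonormalBasis ℝ ↥H with hB
    have hTbox := box_bound (fun j => ((B j : Euc n))) 0 T (fun _ => ρ)
      (fun z hz => ?_) (fun j => by rw [Submodule.norm_coe]; exact B.orthonormal.1 j)
    · have hTfin : μH[((finrank ℝ ↥H : ℕ) : ℝ)] T ≠ ⊤ :=
        ne_top_of_le_ne_top (ENNReal.mul_lt_top
          (by simp [ENNReal.pow_lt_top, ENNReal.natCast_lt_top])
          (ENNReal.prod_lt_top (fun _ _ => ENNReal.ofReal_lt_top))).ne hTbox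
      have hmm : (m : ℝ) = ((finrank ℝ ↥H : ℕ) : ℝ) := by rw [hHm]
      calc μH[(m : ℝ)] (M ∩ Metric.ball x ρ) ≤ μH[(m : ℝ)] (G '' T) := measure_mono hMT
        _ ≤ ((((1 + C₁').toNNReal : ℝ≥0) : ℝ≥0∞)) ^ (m : ℝ) * μH[(m : ℝ)] T :=
            hGLip'.hausdorffMeasure_image_le (by positivity)
        _ < ⊤ := by
            refine ENNReal.mul_lt_top ?_ ?_
            · exact ENNReal.rpow_lt_top_of_nonneg (by positivity) ENNReal.coe_ne_top
            · rw [hmm]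
              exact lt_top_iff_ne_top.2 hTfin
    · obtain ⟨zz, hzz, rfl⟩ := hz
      refine ⟨fun j => (⟪((B j : Euc n)), (zz : Euc n)⟫ : ℝ), ?_, fun j => ?_⟩
      · rw [← onb_expansion B (SetLike.coe_mem zz)]
        rw [zero_add]
      · refine (abs_real_inner_le_norm _ _).trans ?_
        rw [Submodule.norm_coe, B.orthonormal.1 j, one_mul, Submodule.norm_coe]
        rw [hS, Metric.mem_closedBall, dist_zero_right] at hzz
        exact hzz

lemma exists_finrank_m (m : ℕ) (hmn : m ≤ n) :
    ∃ U : Submodule ℝ (Euc n), Module.finrank ℝ U = m := by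
  set b := EuclideanSpace.basisFun (Fin n) ℝ with hb
  have hOn : Orthonormal ℝ (fun i : Fin m => b (Fin.castLE hmn i)) :=
    b.orthonormal.comp _ (Fin.castLE_injective hmn)
  refine ⟨Submodule.span ℝ (Set.range (fun i : Fin m => b (Fin.castLE hmn i))), ?_⟩
  rw [finrank_span_eq_card hOn.linearIndependent]
  simp

lemma crude_bound (m : ℕ) (hmn : m ≤ n) (x : Fin (m+2) → Euc n) :
    μH[((m : ℝ)+1)] (convexHull ℝ (Set.range x))
      ≤ ENNReal.ofReal ((2*((m : ℝ)+1))^(m+1) * Metric.diam (Set.range x)^(m+1)) := by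
  obtain ⟨U, hU⟩ := exists_finrank_m m hmn
  set d : ℝ := Metric.diam (Set.range x) with hd
  have hd0 : 0 ≤ d := Metric.diam_nonneg
  have h1 : ∀ i, ‖x i - x 0‖ ≤ d := by
    intro i
    rw [← dist_eq_norm]
    exact Metric.dist_le_diam_of_mem ((Set.finite_range x).isBounded)
      (Set.mem_range_self i) (Set.mem_range_self 0)
  have := slab_bound m x U hU d d hd0 hd0 h1
    (fun i => ⟨0, U.zero_mem, by rw [sub_zero]; exact h1 i⟩)
  refine this.trans (ENNReal.ofReal_le_ofReal (le_of_eq ?_))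
  rw [pow_succ]
  ring

lemma multiLIntegral_le {μ : Measure (Euc n)} {S : Set (Euc n)} (hS : MeasurableSet S)
    (c : ℝ≥0∞) : ∀ (k : ℕ) (f : (Fin k → Euc n) → ℝ≥0∞),
    (∀ v, (∀ i, v i ∈ S) → f v ≤ c) →
    multiLIntegral (μ.restrict S) k f ≤ c * (μ S) ^ k := by
  intro k
  induction k with
  | zero =>
    intro f hf
    simp only [multiLIntegral, pow_zero, mul_one]
    exact hf Fin.elim0 (fun i => i.elim0)
  | succ k ih =>
    intro f hf
    simp only [multiLIntegral]
    calc ∫⁻ x, multiLIntegral (μ.restrict S) k (fun v => f (Fin.cons x v)) ∂(μ.restrict S)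
        ≤ ∫⁻ _x, c * (μ S)^k ∂(μ.restrict S) := by
          refine lintegral_mono_ae ((ae_restrict_iff' hS).2 (Filter.Eventually.of_forall ?_))
          intro a ha
          exact ih _ (fun v hv => hf (Fin.cons a v) (fun i => Fin.cases ha hv i))
      _ = c * (μ S)^(k+1) := by
          rw [lintegral_const, Measure.restrict_apply_univ, pow_succ]
          ring

end Auxiliary

/-- a compact, closed, `m`-dimensional embedded `C²` submanifold of `ℝⁿ`
(described by local `C²` graph representations) has uniformly bounded discrete curvature
and finite `p`-energy for every `p > 0`. -/
theorem statement11 (n m : ℕ) (hm : 0 < m) (hmn : m < n)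
    (M : Set (Euc n)) (hM : IsCompact M)
    (hgraph : ∀ x ∈ M, ∃ H : Submodule ℝ (Euc n), Module.finrank ℝ H = m ∧
      ∃ r > (0:ℝ), ∃ f : ↥H → ↥Hᗮ,
        ContDiff ℝ 2 (fun w : ↥H => (↑(f w) : Euc n)) ∧
        M ∩ Metric.ball x r
          = {y ∈ Metric.ball x r | ∃ w : ↥H, y = x + (↑w : Euc n) + (↑(f w) : Euc n)}) :
    (∃ B : ℝ, ∀ x : Fin (m+2) → Euc n, (∀ i, x i ∈ M) → discCurv m x ≤ B) ∧
    (∀ p : ℝ, 0 < p → energy m p M < ⊤) := by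
  classical
  have hMmeas : MeasurableSet M := hM.isClosed.measurableSet
  rcases Set.eq_empty_or_nonempty M with rfl | hMne
  · refine ⟨⟨0, fun x hx => absurd (hx 0) (Set.notMem_empty _)⟩, fun p hp => ?_⟩
    have hzero : energy m p (∅ : Set (Euc n)) = 0 := by
      simp [energy, multiLIntegral, Measure.restrict_empty]
    rw [hzero]
    exact (by simp : (0 : ℝ≥0∞) < ⊤)
  have hkey : ∀ x ∈ M, ∃ ρ : ℝ, 0 < ρ ∧ ∃ C : ℝ, 0 ≤ C ∧
      (∀ y : Fin (m+2) → Euc n, (∀ i, y i ∈ M ∩ Metric.ball x ρ) →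
        μH[((m : ℝ)+1)] (convexHull ℝ (Set.range y))
          ≤ ENNReal.ofReal (C * Metric.diam (Set.range y)^(m+2))) ∧
      μH[(m : ℝ)] (M ∩ Metric.ball x ρ) < ⊤ := by
    intro x hx
    obtain ⟨H, hHm, r, hr, f, hfC, heq⟩ := hgraph x hx
    obtain ⟨⟨C, hC0, hC⟩, hfin⟩ := chart_bound m M x H hHm hr
      (fun w => ((f w : Euc n))) hfC (fun w => SetLike.coe_mem _) heq
    exact ⟨r, hr, C, hC0, hC, hfin⟩
  choose! ρ hρ C hC0 hCb hCfin using hkey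
  have hcov : M ⊆ ⋃ x ∈ M, Metric.ball x (ρ x / 2) := by
    intro x hx
    exact Set.mem_biUnion hx (Metric.mem_ball_self (by have := hρ x hx; linarith))
  obtain ⟨b', hb'M, hb'fin, hb'cov⟩ :=
    hM.elim_finite_subcover_image (fun x _ => Metric.isOpen_ball) hcov
  set F' := hb'fin.toFinset with hF'
  have hfinM : μH[(m : ℝ)] M < ⊤ := by
    have hsub : M ⊆ ⋃ x ∈ F', (M ∩ Metric.ball x (ρ x)) := by
      intro z hz
      obtain ⟨c, hc, hball⟩ := Set.mem_iUnion₂.1 (hb'cov hz)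
      refine Set.mem_biUnion (hb'fin.mem_toFinset.2 hc) ⟨hz, ?_⟩
      exact Metric.ball_subset_ball (by linarith [hρ c (hb'M hc)]) hball
    calc μH[(m : ℝ)] M ≤ μH[(m : ℝ)] (⋃ x ∈ F', (M ∩ Metric.ball x (ρ x))) :=
          measure_mono hsub
      _ ≤ ∑ x ∈ F', μH[(m : ℝ)] (M ∩ Metric.ball x (ρ x)) := measure_biUnion_finset_le _ _
      _ < ⊤ := ENNReal.sum_lt_top.2
          (fun c hc => hCfin c (hb'M (hb'fin.mem_toFinset.1 hc)))
  have hFne : F'.Nonempty := by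
    obtain ⟨x0, hx0⟩ := hMne
    obtain ⟨c, hc, _⟩ := Set.mem_iUnion₂.1 (hb'cov hx0)
    exact ⟨c, hb'fin.mem_toFinset.2 hc⟩
  set δ : ℝ := F'.inf' hFne (fun x => ρ x / 2) with hδ
  have hδpos : 0 < δ := by
    rw [hδ, Finset.lt_inf'_iff]
    intro c hc
    have := hρ c (hb'M (hb'fin.mem_toFinset.1 hc))
    linarith
  set Ccr : ℝ := (2*((m : ℝ)+1))^(m+1) with hCcr
  have hCcr0 : 0 < Ccr := by positivity
  set B₁ : ℝ := F'.sup' hFne C with hB₁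
  set B : ℝ := max (max B₁ 0) (Ccr / δ) with hB
  have hB0 : 0 ≤ B := le_trans (le_max_right B₁ 0) (le_max_left _ _)
  have hBd : ∀ y : Fin (m+2) → Euc n, (∀ i, y i ∈ M) → discCurv m y ≤ B := by
    intro y hy
    set d : ℝ := Metric.diam (Set.range y) with hd
    have hd0 : 0 ≤ d := Metric.diam_nonneg
    rcases eq_or_lt_of_le hd0 with hd0' | hdpos
    · have hz : discCurv m y = 0 := by
        rw [discCurv, ← hd, ← hd0', zero_pow (by omega : m + 2 ≠ 0), div_zero]
      rw [hz]; exact hB0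
    · by_cases hdδ : d < δ
      · obtain ⟨c, hc, hball⟩ := Set.mem_iUnion₂.1 (hb'cov (hy 0))
        have hcM : c ∈ M := hb'M hc
        have hcF' : c ∈ F' := hb'fin.mem_toFinset.2 hc
        have hδle : δ ≤ ρ c / 2 := Finset.inf'_le _ hcF'
        have hall : ∀ i, y i ∈ M ∩ Metric.ball c (ρ c) := by
          intro i
          refine ⟨hy i, ?_⟩
          rw [Metric.mem_ball]
          have h1 : dist (y i) (y 0) ≤ d := Metric.dist_le_diam_of_mem
            ((Set.finite_range y).isBounded) (Set.mem_range_self i) (Set.mem_range_self 0)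
          have h2 : dist (y 0) c < ρ c / 2 := Metric.mem_ball.1 hball
          calc dist (y i) c ≤ dist (y i) (y 0) + dist (y 0) c := dist_triangle _ _ _
            _ < d + ρ c / 2 := by linarith
            _ ≤ ρ c := by linarith
        have hμ := hCb c hcM y hall
        have ht : (μH[((m : ℝ)+1)] (convexHull ℝ (Set.range y))).toReal ≤ C c * d^(m+2) :=
          ENNReal.toReal_le_of_le_ofReal (mul_nonneg (hC0 c hcM) (by positivity)) hμ
        rw [discCurv, ← hd, div_le_iff₀ (by positivity)]
        calc (μH[((m : ℝ)+1)] (convexHull ℝ (Set.range y))).toReal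
            ≤ C c * d^(m+2) := ht
          _ ≤ B * d^(m+2) := by
              have hCcB : C c ≤ B :=
                le_trans (le_trans (Finset.le_sup' C hcF') (le_max_left B₁ 0))
                  (le_max_left _ _)
              exact mul_le_mul_of_nonneg_right hCcB (by positivity)
      · push_neg at hdδ
        have hcr := crude_bound m (le_of_lt hmn) y
        have ht : (μH[((m : ℝ)+1)] (convexHull ℝ (Set.range y))).toReal ≤ Ccr * d^(m+1) := by
          refine ENNReal.toReal_le_of_le_ofReal (by positivity) ?_
          rw [hCcr]
          exact hcr
        rw [discCurv, ← hd, div_le_iff₀ (by positivity)]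
        calc (μH[((m : ℝ)+1)] (convexHull ℝ (Set.range y))).toReal
            ≤ Ccr * d^(m+1) := ht
          _ ≤ (Ccr/δ) * d^(m+2) := by
              have h1 : Ccr * d^(m+1) * 1 ≤ Ccr * d^(m+1) * (d/δ) := by
                refine mul_le_mul_of_nonneg_left ?_ (by positivity)
                rw [le_div_iff₀ hδpos]
                linarith
              calc Ccr * d^(m+1) = Ccr * d^(m+1) * 1 := by ring
                _ ≤ Ccr * d^(m+1) * (d/δ) := h1
                _ = (Ccr/δ) * d^(m+2) := by
                    rw [pow_succ]
                    field_simp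
                    ring
          _ ≤ B * d^(m+2) := mul_le_mul_of_nonneg_right (le_max_right _ _) (by positivity)
  refine ⟨⟨B, hBd⟩, fun p hp => ?_⟩
  have hbd : ∀ v : Fin (m+2) → Euc n, (∀ i, v i ∈ M) →
      ENNReal.ofReal (discCurv m v ^ p) ≤ ENNReal.ofReal (B ^ p) := by
    intro v hv
    refine ENNReal.ofReal_le_ofReal (Real.rpow_le_rpow ?_ (hBd v hv) hp.le)
    exact div_nonneg ENNReal.toReal_nonneg (pow_nonneg Metric.diam_nonneg _)
  have hE : energy m p M ≤ ENNReal.ofReal (B^p) * (μH[(m : ℝ)] M)^(m+2) :=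
    multiLIntegral_le hMmeas _ (m+2) _ hbd
  exact lt_of_le_of_lt hE (ENNReal.mul_lt_top ENNReal.ofReal_lt_top
    (ENNReal.pow_lt_top hfinM))
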